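/- Let C be a set of vectors in ℝ^9 such that every x ∈ C has |x|² = 2, every two distinct x, y ∈ C satisfy ⟨x, y⟩ ≤ 1, and C contains the set {(x, 0) : x ∈ E_8 roots}, i.e. the E_8 root system placed in the hyperplane of vectors with last coordinate 0. Then C has at most 272 elements. -/

import Mathlib

open scoped RealInnerProductSpace
open Module

/-- The `Dₙ` root system: all vectors `±eᵢ ± eⱼ` with `i < j`. -/
def DRootSystem (n : ℕ) : Set (EuclideanSpace ℝ (Fin n)) :=
  { v | ∃ i j : Fin n, i < j ∧ ∃ s t : ℝ, (s = 1 ∨ s = -1) ∧ (t = 1 ∨ t = -1) ∧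
      v = s • EuclideanSpace.single i (1 : ℝ) + t • EuclideanSpace.single j (1 : ℝ) }

/-- The `E₈` root system: the vectors `±eᵢ ± eⱼ` (`i < j`) together with the vectors
all of whose coordinates are `±1/2`, with an even number of minus signs. -/
def E8RootSystem : Set (EuclideanSpace ℝ (Fin 8)) :=
  DRootSystem 8 ∪
    { v | (∀ i, v i = 1 / 2 ∨ v i = -(1 / 2)) ∧ Even {i : Fin 8 | v i = -(1 / 2)}.ncard }

/-- The `E₈` root system placed in the hyperplane of `ℝ⁹` of vectors whose last
coordinate is `0`. -/
def E8EmbeddedIn9 : Set (EuclideanSpace ℝ (Fin 9)) :=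
  { v | v 8 = 0 ∧ (show EuclideanSpace ℝ (Fin 8) from WithLp.toLp 2 (fun i : Fin 8 => v i.castSucc)) ∈ E8RootSystem }

lemma sortedQ (b1 b2 b3 b4 b5 b6 b7 b8 : ℝ)
    (h12 : b2 ≤ b1) (h23 : b3 ≤ b2) (h34 : b4 ≤ b3) (h45 : b5 ≤ b4)
    (h56 : b6 ≤ b5) (h67 : b7 ≤ b6) (h78 : b8 ≤ b7) (h8 : 0 ≤ b8)
    (hc1 : b1 + b2 ≤ 1)
    (hc2 : b1 + b2 + b3 + b4 + b5 + b6 + b7 + b8 - 2 * b8 ≤ 2) :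
    b1^2 + b2^2 + b3^2 + b4^2 + b5^2 + b6^2 + b7^2 + b8^2 ≤ 1 := by
  have d12 : (0:ℝ) ≤ b1 - b2 := by linarith
  have d23 : (0:ℝ) ≤ b2 - b3 := by linarith
  have d34 : (0:ℝ) ≤ b3 - b4 := by linarith
  have d45 : (0:ℝ) ≤ b4 - b5 := by linarith
  have d56 : (0:ℝ) ≤ b5 - b6 := by linarith
  have d67 : (0:ℝ) ≤ b6 - b7 := by linarith
  have d78 : (0:ℝ) ≤ b7 - b8 := by linarith
  have c1 : (0:ℝ) ≤ 1 - b1 - b2 := by linarith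
  have c2 : (0:ℝ) ≤ 2 - (b1 + b2 + b3 + b4 + b5 + b6 + b7 + b8) + 2 * b8 := by linarith
  have key : 1 - (b1^2 + b2^2 + b3^2 + b4^2 + b5^2 + b6^2 + b7^2 + b8^2) =
      2*((b1-b2)*(b2-b3)) + 2*((b1-b2)*(b3-b4)) + 2*((b1-b2)*(b4-b5)) + 1*((b1-b2)*(b5-b6)) + 1*((b1-b2)*(b6-b7)) + 1*((b1-b2)*(b7-b8)) + 2*((b1-b2)*(1-b1-b2)) + 2*((b2-b3)*(b2-b3)) + 4*((b2-b3)*(b3-b4)) + 4*((b2-b3)*(b4-b5)) + 2*((b2-b3)*(b5-b6)) + 2*((b2-b3)*(b6-b7)) + 2*((b2-b3)*(b7-b8)) + 4*((b2-b3)*(1-b1-b2)) + 1*((b3-b4)*(b3-b4)) + 2*((b3-b4)*(b4-b5)) + 1*((b3-b4)*(b5-b6)) + 1*((b3-b4)*(b6-b7)) + 1*((b3-b4)*(b7-b8)) + 4*((b3-b4)*(1-b1-b2)) + 4*((b4-b5)*(1-b1-b2)) + 1*((b5-b6)*(b6-b7)) + 2*((b5-b6)*(b7-b8)) + 2*((b5-b6)*b8)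 + 2*((b5-b6)*(1-b1-b2)) + 1*((b5-b6)*(2-(b1+b2+b3+b4+b5+b6+b7+b8)+2*b8)) + 1*((b6-b7)*(b7-b8)) + 2*((b6-b7)*b8) + 2*((b6-b7)*(1-b1-b2)) + 1*((b6-b7)*(2-(b1+b2+b3+b4+b5+b6+b7+b8)+2*b8)) + 2*((b7-b8)*b8) + 2*((b7-b8)*(1-b1-b2)) + 1*((b7-b8)*(2-(b1+b2+b3+b4+b5+b6+b7+b8)+2*b8)) + 2*(b8*(2-(b1+b2+b3+b4+b5+b6+b7+b8)+2*b8)) + 1*((1-b1-b2)*(1-b1-b2)) := by ring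
  linarith [mul_nonneg d12 d23, mul_nonneg d12 d34, mul_nonneg d12 d45, mul_nonneg d12 d56, mul_nonneg d12 d67, mul_nonneg d12 d78, mul_nonneg d12 c1, mul_nonneg d23 d23, mul_nonneg d23 d34, mul_nonneg d23 d45, mul_nonneg d23 d56, mul_nonneg d23 d67, mul_nonneg d23 d78, mul_nonneg d23 c1, mul_nonneg d34 d34, mul_nonneg d34 d45, mul_nonneg d34 d56, mul_nonneg d34 d67, mul_nonneg d34 d78, mul_nonneg d34 c1, mul_nonneg d45 c1, mul_nonneg d56 d67, mul_nonneg d56 d78, mul_nonneg d56 h8, mul_nonneg d56 c1, mul_nonneg d56 c2, mul_nonneg d67 d78, mul_nonneg d67 h8, mul_nonneg d67 c1, mul_nonneg d67 c2, mul_nonneg d78 h8, mul_nonneg d78 c1, mul_nonneg d78 c2, mul_nonneg h8 c2, mul_nonneg c1 c1]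

lemma absQ (a : Fin 8 → ℝ) (h0 : ∀ i, 0 ≤ a i)
    (hpair : ∀ i j, i ≠ j → a i + a j ≤ 1)
    (hsum : ∀ k, (∑ i, a i) - 2 * a k ≤ 2) :
    ∑ i, (a i)^2 ≤ 1 := by
  set σ := Tuple.sort a with hσ
  have mono := Tuple.monotone_sort a
  have hord : ∀ i j : Fin 8, i ≤ j → a (σ i) ≤ a (σ j) := fun i j h => mono h
  have hsum8 : a (σ 0) + a (σ 1) + a (σ 2) + a (σ 3) + a (σ 4) + a (σ 5) + a (σ 6) + a (σ 7)
      = ∑ i, a i := by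
    rw [← Equiv.sum_comp σ a, Fin.sum_univ_eight]
  have key := sortedQ (a (σ 7)) (a (σ 6)) (a (σ 5)) (a (σ 4)) (a (σ 3)) (a (σ 2)) (a (σ 1)) (a (σ 0))
    (hord 6 7 (by decide)) (hord 5 6 (by decide)) (hord 4 5 (by decide)) (hord 3 4 (by decide))
    (hord 2 3 (by decide)) (hord 1 2 (by decide)) (hord 0 1 (by decide)) (h0 (σ 0))
    (hpair (σ 7) (σ 6) (σ.injective.ne (by decide)))
    (by have := hsum (σ 0); linarith)
  have hsq : ∑ i, (a i)^2 = a (σ 0)^2 + a (σ 1)^2 + a (σ 2)^2 + a (σ 3)^2 + a (σ 4)^2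
      + a (σ 5)^2 + a (σ 6)^2 + a (σ 7)^2 := by
    rw [← Equiv.sum_comp σ (fun i => (a i)^2), Fin.sum_univ_eight]
  rw [hsq]; linarith

lemma inner_euclid8 (u v : EuclideanSpace ℝ (Fin 8)) : ⟪u, v⟫ = ∑ i, u i * v i := by
  simp [PiLp.inner_apply, RCLike.inner_apply, mul_comm]

lemma dconstraint (u : EuclideanSpace ℝ (Fin 8))
    (hroot : ∀ r ∈ E8RootSystem, ⟪u, r⟫ ≤ 1)
    {i j : Fin 8} (hij : i < j) {s t : ℝ} (hs : s = 1 ∨ s = -1) (ht : t = 1 ∨ t = -1) :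
    s * u i + t * u j ≤ 1 := by
  have hmem : (s • EuclideanSpace.single i (1:ℝ) + t • EuclideanSpace.single j (1:ℝ))
      ∈ E8RootSystem := Or.inl ⟨i, j, hij, s, t, hs, ht, rfl⟩
  have h := hroot _ hmem
  rw [inner_add_right, real_inner_smul_right, real_inner_smul_right,
    EuclideanSpace.inner_single_right, EuclideanSpace.inner_single_right] at h
  simpa [mul_comm] using h

lemma abs_pair (u : EuclideanSpace ℝ (Fin 8))
    (hroot : ∀ r ∈ E8RootSystem, ⟪u, r⟫ ≤ 1)
    {i j : Fin 8} (hij : i ≠ j) : |u i| + |u j| ≤ 1 := by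
  wlog h : i < j generalizing i j
  · have := this hij.symm (lt_of_le_of_ne (not_lt.mp h) hij.symm)
    linarith
  · have h1 := dconstraint u hroot h (Or.inl rfl) (Or.inl rfl)
    have h2 := dconstraint u hroot h (Or.inl rfl) (Or.inr rfl)
    have h3 := dconstraint u hroot h (Or.inr rfl) (Or.inl rfl)
    have h4 := dconstraint u hroot h (Or.inr rfl) (Or.inr rfl)
    rcases abs_cases (u i) with ⟨hi, _⟩ | ⟨hi, _⟩ <;>
      rcases abs_cases (u j) with ⟨hj, _⟩ | ⟨hj, _⟩ <;> rw [hi, hj] <;> linarith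

lemma half_constraint (u : EuclideanSpace ℝ (Fin 8))
    (hroot : ∀ r ∈ E8RootSystem, ⟪u, r⟫ ≤ 1) (k : Fin 8) :
    (∑ i, |u i|) - 2 * |u k| ≤ 2 := by
  classical
  set N : Finset (Fin 8) := Finset.univ.filter (fun i => u i < 0) with hN
  set T : Finset (Fin 8) :=
    if Even N.card then N else (if k ∈ N then N.erase k else insert k N) with hT
  have hTeven : Even T.card := by
    rw [hT]
    by_cases hE : Even N.card
    · simpa [hE] using hE
    · rcases Nat.not_even_iff_odd.mp hE with hOdd
      by_cases hk : k ∈ N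
      · simp only [hE, hk, if_false, if_true]
        rw [Finset.card_erase_of_mem hk]
        exact Nat.Odd.sub_odd hOdd odd_one
      · simp only [hE, hk, if_false]
        rw [Finset.card_insert_of_notMem hk]
        exact Nat.even_add_one.mpr (Nat.not_even_iff_odd.mpr hOdd)
  set v : EuclideanSpace ℝ (Fin 8) := WithLp.toLp 2 (fun i => if i ∈ T then -(1/2 : ℝ) else 1/2) with hv
  have hvmem : v ∈ E8RootSystem := by
    refine Or.inr ⟨fun i => ?_, ?_⟩
    · by_cases hi : i ∈ T <;> simp [hv, hi]
    · have hset : {i : Fin 8 | v i = -(1/2)} = ↑T := by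
        ext i; by_cases hi : i ∈ T <;> simp [hv, hi] <;> norm_num
      rw [hset, Set.ncard_coe_finset]
      exact hTeven
  have h := hroot v hvmem
  rw [inner_euclid8] at h
  set w : Fin 8 → ℝ := fun i => if i ∈ T then -(u i) else u i with hw
  have hsumv : ∑ i, u i * v i = (∑ i, w i) / 2 := by
    rw [Finset.sum_div]
    refine Finset.sum_congr rfl fun i _ => ?_
    by_cases hi : i ∈ T <;> simp [hv, hw, hi] <;> ring
  have hw2 : ∑ i, w i ≤ 2 := by
    rw [hsumv] at h; linarith
  -- lower bound for ∑ w
  have hTk : ∀ i, i ≠ k → (i ∈ T ↔ u i < 0) := by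
    intro i hik
    rw [hT]
    by_cases hE : Even N.card
    · rw [if_pos hE]; simp [hN]
    · by_cases hk : k ∈ N
      · rw [if_neg hE, if_pos hk]; simp [Finset.mem_erase, hik, hN]
      · rw [if_neg hE, if_neg hk]; simp [Finset.mem_insert, hik, hN]
  have hwi : ∀ i, i ≠ k → |u i| = w i := by
    intro i hik
    by_cases hneg : u i < 0
    · rw [hw]; simp [(hTk i hik).mpr hneg, abs_of_neg hneg]
    · have : i ∉ T := fun hc => hneg ((hTk i hik).mp hc)
      rw [hw]; simp [this, abs_of_nonneg (not_lt.mp hneg)]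
  have hwk : -|u k| ≤ w k := by
    rw [hw]
    by_cases hk : k ∈ T <;> simp [hk]
    · exact le_abs_self (u k)
    · exact neg_abs_le (u k)
  have e1 : ∑ i ∈ Finset.univ.erase k, |u i| + |u k| = ∑ i, |u i| :=
    Finset.sum_erase_add _ _ (Finset.mem_univ k)
  have e2 : ∑ i ∈ Finset.univ.erase k, w i + w k = ∑ i, w i :=
    Finset.sum_erase_add _ _ (Finset.mem_univ k)
  have e3 : ∑ i ∈ Finset.univ.erase k, |u i| = ∑ i ∈ Finset.univ.erase k, w i :=
    Finset.sum_congr rfl fun i hi => hwi i (Finset.ne_of_mem_erase hi)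
  linarith

lemma voronoi (u : EuclideanSpace ℝ (Fin 8))
    (hroot : ∀ r ∈ E8RootSystem, ⟪u, r⟫ ≤ 1) :
    ∑ i, (u i)^2 ≤ 1 := by
  have := absQ (fun i => |u i|) (fun i => abs_nonneg _)
    (fun i j hij => abs_pair u hroot hij) (fun k => half_constraint u hroot k)
  simpa [sq_abs] using this

lemma nonpos_inner_aux : ∀ (n : ℕ) (E : Type) [NormedAddCommGroup E] [InnerProductSpace ℝ E]
    [FiniteDimensional ℝ E], finrank ℝ E = n → ∀ s : Finset E, (0 : E) ∉ s →
    (∀ x ∈ s, ∀ y ∈ s, x ≠ y → ⟪x, y⟫ ≤ 0) → s.card ≤ 2 * n := by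
  intro n
  induction n using Nat.strong_induction_on with
  | _ n ih =>
    intro E _ _ _ hrank s h0 hp
    rcases s.eq_empty_or_nonempty with rfl | ⟨v, hv⟩
    · simp
    have hv0 : v ≠ 0 := fun h => h0 (h ▸ hv)
    have hnpos : 1 ≤ n := by
      have : Nontrivial E := ⟨v, 0, hv0⟩
      have := Module.finrank_pos (R := ℝ) (M := E)
      omega
    have hKrank : finrank ℝ ((ℝ ∙ v)ᗮ) = n - 1 := by
      have h1 : finrank ℝ (ℝ ∙ v) = 1 := finrank_span_singleton hv0
      have h2 := Submodule.finrank_add_finrank_orthogonal (K := (ℝ ∙ v))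
      omega
    set c : E → ℝ := fun w => ⟪v, w⟫ / ‖v‖ ^ 2 with hc
    set p : E → ((ℝ ∙ v)ᗮ) := fun w => Submodule.orthogonalProjectionOnto ((ℝ ∙ v)ᗮ) w with hpdef
    have hvnorm : (0:ℝ) < ‖v‖ ^ 2 := pow_pos (norm_pos_iff.mpr hv0) 2
    have hdec : ∀ w : E, w = c w • v + (p w : E) := by
      intro w
      have h1 := Submodule.starProjection_add_starProjection_orthogonal (K := ℝ ∙ v) w
      have h2 : (ℝ ∙ v).starProjection w = c w • v := by
        rw [Submodule.starProjection_singleton, hc]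
        norm_num [real_inner_self_eq_norm_sq]
      rw [h2] at h1
      exact h1.symm
    have hvp : ∀ w : E, ⟪v, (p w : E)⟫ = 0 := fun w =>
      ((Submodule.mem_orthogonal _ _).mp (p w).2 v (Submodule.mem_span_singleton_self v))
    have hpv : ∀ w : E, ⟪(p w : E), v⟫ = 0 := fun w => by
      rw [real_inner_comm]; exact hvp w
    have hinner : ∀ w w' : E, ⟪w, w'⟫ = c w * c w' * ‖v‖ ^ 2 + ⟪(p w : E), (p w' : E)⟫ := by
      intro w w'
      conv_lhs => rw [hdec w, hdec w']
      simp only [inner_add_left, inner_add_right, real_inner_smul_left, real_inner_smul_right,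
        hvp, hpv, real_inner_self_eq_norm_sq, mul_zero, zero_mul, add_zero, zero_add]
      ring
    have hcle : ∀ w ∈ s, w ≠ v → c w ≤ 0 := by
      intro w hw hwv
      have := hp v hv w hw (Ne.symm hwv)
      rw [hc]
      exact div_nonpos_of_nonpos_of_nonneg this (by positivity)
    -- vectors in s \ {v} whose projection is zero: at most one
    classical
    set zs := (s.erase v).filter (fun w => p w = 0) with hzs
    set ns := (s.erase v).filter (fun w => ¬ p w = 0) with hns
    have hzcard : zs.card ≤ 1 := by
      refine Finset.card_le_one.mpr fun w hw w' hw' => ?_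
      simp only [hzs, Finset.mem_filter, Finset.mem_erase] at hw hw'
      by_contra hne
      have hzw : w = c w • v := by
        have := hdec w; rw [hw.2] at this; simpa using this
      have hzw' : w' = c w' • v := by
        have := hdec w'; rw [hw'.2] at this; simpa using this
      have hcw : c w < 0 := by
        rcases lt_or_eq_of_le (hcle w hw.1.2 hw.1.1) with h | h
        · exact h
        · exfalso; apply h0
          have hz : w = 0 := by rw [hzw, h, zero_smul]
          exact hz ▸ hw.1.2
      have hcw' : c w' < 0 := by
        rcases lt_or_eq_of_le (hcle w' hw'.1.2 hw'.1.1) with h | h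
        · exact h
        · exfalso; apply h0
          have hz : w' = 0 := by rw [hzw', h, zero_smul]
          exact hz ▸ hw'.1.2
      have hpos : 0 < ⟪w, w'⟫ := by
        rw [hinner w w']
        have h1 : (p w : E) = 0 := by rw [hw.2]; simp
        have h2 : (p w' : E) = 0 := by rw [hw'.2]; simp
        rw [h1, h2, inner_zero_left]
        have : 0 < c w * c w' := mul_pos_of_neg_of_neg hcw hcw'
        nlinarith
      have := hp w hw.1.2 w' hw'.1.2 hne
      linarith
    -- the rest injects into the orthogonal complement
    have hinj : ∀ w ∈ ns, ∀ w' ∈ ns, p w = p w' → w = w' := by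
      intro w hw w' hw' hpe
      simp only [hns, Finset.mem_filter, Finset.mem_erase] at hw hw'
      by_contra hne
      have hpos : 0 < ⟪w, w'⟫ := by
        rw [hinner w w', hpe]
        have hne : (p w' : E) ≠ 0 := fun h => hw'.2 (ZeroMemClass.coe_eq_zero.mp h)
        have h1 : 0 < ⟪(p w' : E), (p w' : E)⟫ := by
          rw [real_inner_self_eq_norm_sq]
          exact pow_pos (norm_pos_iff.mpr hne) 2
        have h2 : 0 ≤ c w * c w' := by
          nlinarith [hcle w hw.1.2 hw.1.1, hcle w' hw'.1.2 hw'.1.1]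
        nlinarith
      have := hp w hw.1.2 w' hw'.1.2 hne
      linarith
    set t := ns.image p with ht
    have htcard : ns.card = t.card := (Finset.card_image_of_injOn hinj).symm
    have ht0 : (0 : (ℝ ∙ v)ᗮ) ∉ t := by
      intro hmem
      rcases Finset.mem_image.mp hmem with ⟨w, hw, hw0⟩
      simp only [hns, Finset.mem_filter] at hw
      exact hw.2 hw0
    have htp : ∀ x ∈ t, ∀ y ∈ t, x ≠ y → ⟪x, y⟫ ≤ 0 := by
      intro x hx y hy hxy
      rcases Finset.mem_image.mp hx with ⟨w, hw, rfl⟩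
      rcases Finset.mem_image.mp hy with ⟨w', hw', rfl⟩
      have hwne : w ≠ w' := fun h => hxy (by rw [h])
      simp only [hns, Finset.mem_filter, Finset.mem_erase] at hw hw'
      have h1 := hp w hw.1.2 w' hw'.1.2 hwne
      have h2 : 0 ≤ c w * c w' := by
        nlinarith [hcle w hw.1.2 hw.1.1, hcle w' hw'.1.2 hw'.1.1]
      have h3 := hinner w w'
      have : ⟪(p w : E), (p w' : E)⟫ ≤ 0 := by nlinarith
      exact this
    have hrec := ih (n - 1) (by omega) ((ℝ ∙ v)ᗮ) hKrank t ht0 htp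
    have hsplit : zs.card + ns.card = (s.erase v).card :=
      Finset.card_filter_add_card_filter_not _
    have hec : (s.erase v).card = s.card - 1 := Finset.card_erase_of_mem hv
    have hcpos : 1 ≤ s.card := Finset.card_pos.mpr ⟨v, hv⟩
    omega

attribute [local instance] Classical.propDecidable

noncomputable def dMap (p : (Fin 8 × Fin 8) × Bool × Bool) : EuclideanSpace ℝ (Fin 8) :=
  (if p.2.1 then (1:ℝ) else -1) • EuclideanSpace.single p.1.1 (1 : ℝ)
    + (if p.2.2 then (1:ℝ) else -1) • EuclideanSpace.single p.1.2 (1 : ℝ)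

noncomputable def hMap (b : Fin 8 → Bool) : EuclideanSpace ℝ (Fin 8) :=
  WithLp.toLp 2 (fun i => if b i then -(1/2 : ℝ) else 1/2)

def dDom : Finset ((Fin 8 × Fin 8) × Bool × Bool) :=
  Finset.univ.filter (fun p => p.1.1 < p.1.2)

def hDom : Finset (Fin 8 → Bool) :=
  Finset.univ.filter (fun b => Even (Finset.univ.filter (fun i => b i = true)).card)

set_option maxRecDepth 10000 in
lemma dDom_card : dDom.card = 112 := by decide

set_option maxRecDepth 10000 in
lemma hDom_card : hDom.card = 128 := by decide

noncomputable def E8Finset : Finset (EuclideanSpace ℝ (Fin 8)) :=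
  dDom.image dMap ∪ hDom.image hMap

set_option maxRecDepth 10000 in
lemma E8_subset_finset : E8RootSystem ⊆ ↑E8Finset := by
  rintro v (⟨i, j, hij, s, t, hs, ht, rfl⟩ | ⟨hhalf, heven⟩)
  · apply Finset.mem_coe.mpr
    apply Finset.mem_union_left
    apply Finset.mem_image.mpr
    have hmem : ∀ b1 b2 : Bool, ((i, j), (b1, b2)) ∈ dDom := by
      intro b1 b2; simp [dDom, hij]
    rcases hs with rfl | rfl <;> rcases ht with rfl | rfl
    · exact ⟨((i,j),(true,true)), hmem _ _, by simp [dMap]⟩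
    · exact ⟨((i,j),(true,false)), hmem _ _, by simp [dMap]⟩
    · exact ⟨((i,j),(false,true)), hmem _ _, by simp [dMap]⟩
    · exact ⟨((i,j),(false,false)), hmem _ _, by simp [dMap]⟩
  · apply Finset.mem_coe.mpr
    apply Finset.mem_union_right
    apply Finset.mem_image.mpr
    refine ⟨fun i => if v i = -(1/2) then true else false, ?_, ?_⟩
    · have hset : {i : Fin 8 | v i = -(1/2)} =
          ↑(Finset.univ.filter (fun i => (if v i = -(1/2) then true else false) = true)) := by
        ext i
        by_cases hi : v i = -(1/2) <;> simp [hi]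
      rw [hset, Set.ncard_coe_finset] at heven
      simpa [hDom] using heven
    · ext i
      by_cases hi : v i = -(1/2)
      · simp [hMap, hi]
      · have : v i = 1/2 := (hhalf i).resolve_right hi
        simp only [hMap, PiLp.toLp_apply, hi, if_false, this]
        norm_num

lemma E8Finset_card : E8Finset.card ≤ 240 := by
  calc E8Finset.card ≤ (dDom.image dMap).card + (hDom.image hMap).card :=
        Finset.card_union_le _ _
    _ ≤ dDom.card + hDom.card :=
        Nat.add_le_add (Finset.card_image_le) (Finset.card_image_le)
    _ = 240 := by rw [dDom_card, hDom_card]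

-- embedding
noncomputable def embE (r : EuclideanSpace ℝ (Fin 8)) : EuclideanSpace ℝ (Fin 9) :=
  WithLp.toLp 2 (Fin.snoc (α := fun _ => ℝ) r.ofLp 0)

def resE (x : EuclideanSpace ℝ (Fin 9)) : EuclideanSpace ℝ (Fin 8) :=
  WithLp.toLp 2 (fun i : Fin 8 => x i.castSucc)

lemma eight_eq_last : (8 : Fin 9) = Fin.last 8 := by decide

lemma embE_last (r : EuclideanSpace ℝ (Fin 8)) : embE r 8 = 0 := by
  rw [eight_eq_last]; exact Fin.snoc_last (α := fun _ : Fin 9 => ℝ) (0:ℝ) r.ofLp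

lemma resE_embE (r : EuclideanSpace ℝ (Fin 8)) : resE (embE r) = r := by
  ext i
  simp only [resE, embE, PiLp.toLp_apply, Fin.snoc_castSucc]

lemma embE_mem {r : EuclideanSpace ℝ (Fin 8)} (hr : r ∈ E8RootSystem) :
    embE r ∈ E8EmbeddedIn9 := by
  refine ⟨embE_last r, ?_⟩
  have : (show EuclideanSpace ℝ (Fin 8) from WithLp.toLp 2 (fun i : Fin 8 => embE r i.castSucc)) = r :=
    resE_embE r
  rw [this]; exact hr

lemma mem_embE {x : EuclideanSpace ℝ (Fin 9)} (hx : x ∈ E8EmbeddedIn9) :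
    x = embE (resE x) ∧ resE x ∈ E8RootSystem := by
  refine ⟨?_, hx.2⟩
  ext i
  refine Fin.lastCases ?_ ?_ i
  · rw [← eight_eq_last]
    rw [hx.1, embE_last]
  · intro j
    show x j.castSucc = embE (resE x) j.castSucc
    rw [show embE (resE x) j.castSucc = resE x j from Fin.snoc_castSucc (α := fun _ : Fin 9 => ℝ) (0:ℝ) (resE x).ofLp j]
    rfl

lemma inner_split (x y : EuclideanSpace ℝ (Fin 9)) :
    ⟪x, y⟫ = ⟪resE x, resE y⟫ + x 8 * y 8 := by
  have h9 : ⟪x, y⟫ = ∑ i : Fin 9, x i * y i := by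
    simp [PiLp.inner_apply, RCLike.inner_apply, mul_comm]
  rw [h9, inner_euclid8, Fin.sum_univ_castSucc, ← eight_eq_last]
  rfl

lemma norm_split (x : EuclideanSpace ℝ (Fin 9)) :
    ‖x‖ ^ 2 = (∑ i, (resE x i)^2) + (x 8)^2 := by
  have := inner_split x x
  rw [real_inner_self_eq_norm_sq, inner_euclid8] at this
  rw [this]; congr 1
  · exact Finset.sum_congr rfl fun i _ => (pow_two (resE x i)).symm
  · exact (pow_two (x 8)).symm

theorem statement8 (C : Set (EuclideanSpace ℝ (Fin 9)))
    (hnorm : ∀ x ∈ C, ‖x‖ ^ 2 = 2)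
    (hip : ∀ x ∈ C, ∀ y ∈ C, x ≠ y → ⟪x, y⟫ ≤ 1)
    (hE8 : E8EmbeddedIn9 ⊆ C) :
    C.Finite ∧ C.ncard ≤ 272 := by
  classical
  obtain ⟨tE8, htE8sub, htE8card⟩ :
      ∃ t : Finset (EuclideanSpace ℝ (Fin 8)), E8RootSystem ⊆ ↑t ∧ t.card ≤ 240 :=
    ⟨E8Finset, E8_subset_finset, E8Finset_card⟩
  -- the embedded E8 is finite with at most 240 elements
  have hEmbSub : E8EmbeddedIn9 ⊆ ↑(tE8.image embE) := by
    intro x hx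
    obtain ⟨hxe, hxr⟩ := mem_embE hx
    exact Finset.mem_coe.mpr (Finset.mem_image.mpr ⟨resE x, htE8sub hxr, hxe.symm⟩)
  have hEmbFin : E8EmbeddedIn9.Finite := Set.Finite.subset (tE8.image embE).finite_toSet hEmbSub
  have hEmbCard : E8EmbeddedIn9.ncard ≤ 240 := by
    calc E8EmbeddedIn9.ncard ≤ (↑(tE8.image embE) : Set _).ncard :=
          Set.ncard_le_ncard hEmbSub (tE8.image embE).finite_toSet
      _ = (tE8.image embE).card := Set.ncard_coe_finset _
      _ ≤ tE8.card := Finset.card_image_le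
      _ ≤ 240 := htE8card
  -- any point of C outside the embedded E8 has (x 8)^2 ≥ 1 and small projection
  have key : ∀ x ∈ C, x ∉ E8EmbeddedIn9 → 1 ≤ (x 8)^2 := by
    intro x hxC hxE
    have hroots : ∀ r ∈ E8RootSystem, ⟪resE x, r⟫ ≤ 1 := by
      intro r hr
      have hrC : embE r ∈ C := hE8 (embE_mem hr)
      have hne : x ≠ embE r := fun h => hxE (h ▸ embE_mem hr)
      have := hip x hxC (embE r) hrC hne
      rw [inner_split, embE_last, mul_zero, add_zero, resE_embE] at this
      exact this
    have hv := voronoi (resE x) hroots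
    have hn := hnorm x hxC
    rw [norm_split] at hn
    linarith
  -- bound for the two caps
  have capBound : ∀ ε : ℝ, ε = 1 ∨ ε = -1 → ∀ F : Finset (EuclideanSpace ℝ (Fin 9)),
      (∀ x ∈ F, x ∈ C ∧ 1 ≤ ε * x 8) → F.card ≤ 16 := by
    intro ε hε F hF
    have hε2 : ε * ε = 1 := by rcases hε with rfl | rfl <;> norm_num
    by_cases hz : ∃ x ∈ F, resE x = 0
    · obtain ⟨x, hxF, hx0⟩ := hz
      have hsub : F ⊆ {x} := by
        intro y hyF
        rw [Finset.mem_singleton]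
        by_contra hne
        obtain ⟨hyC, hy8⟩ := hF y hyF
        obtain ⟨hxC, hx8⟩ := hF x hxF
        have hn := hnorm x hxC
        rw [norm_split, hx0] at hn
        simp only [Pi.zero_apply] at hn
        have hx82 : (x 8)^2 = 2 := by
          have : ∑ i : Fin 8, (0:ℝ)^2 = 0 := by simp
          rw [show (∑ i : Fin 8, ((0 : EuclideanSpace ℝ (Fin 8)) i)^2) = 0 by simp] at hn
          linarith
        have hip1 := hip y hyC x hxC (fun h => hne h)
        rw [inner_split, hx0] at hip1
        have : ⟪resE y, (0 : EuclideanSpace ℝ (Fin 8))⟫ = 0 := inner_zero_right _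
        rw [this, zero_add] at hip1
        -- y 8 * x 8 = (ε * y 8) * (ε * x 8) ≥ 1 * (ε * x 8) > 1
        nlinarith [mul_le_mul hy8 hx8 (by linarith) (by linarith : (0:ℝ) ≤ ε * y 8)]
      calc F.card ≤ ({x} : Finset _).card := Finset.card_le_card hsub
        _ = 1 := Finset.card_singleton x
        _ ≤ 16 := by norm_num
    · push_neg at hz
      set t := F.image resE with ht
      have hinj : ∀ x ∈ F, ∀ y ∈ F, resE x = resE y → x = y := by
        intro x hxF y hyF hre
        obtain ⟨hxC, hx8⟩ := hF x hxF
        obtain ⟨hyC, hy8⟩ := hF y hyF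
        have hnx := hnorm x hxC; have hny := hnorm y hyC
        rw [norm_split] at hnx hny
        have hsq : (x 8)^2 = (y 8)^2 := by
          rw [hre] at hnx; linarith
        have h8 : x 8 = y 8 := by
          rcases hε with rfl | rfl <;> nlinarith
        ext i
        refine Fin.lastCases ?_ ?_ i
        · rw [← eight_eq_last]; exact h8
        · intro j; exact congrArg (fun z : EuclideanSpace ℝ (Fin 8) => z j) hre
      have hcard : F.card = t.card := (Finset.card_image_of_injOn hinj).symm
      have h0t : (0 : EuclideanSpace ℝ (Fin 8)) ∉ t := by
        intro hmem
        obtain ⟨x, hxF, hx0⟩ := Finset.mem_image.mp hmem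
        exact hz x hxF hx0
      have hpt : ∀ a ∈ t, ∀ b ∈ t, a ≠ b → ⟪a, b⟫ ≤ 0 := by
        intro a ha b hb hab
        obtain ⟨x, hxF, rfl⟩ := Finset.mem_image.mp ha
        obtain ⟨y, hyF, rfl⟩ := Finset.mem_image.mp hb
        have hne : x ≠ y := fun h => hab (by rw [h])
        obtain ⟨hxC, hx8⟩ := hF x hxF
        obtain ⟨hyC, hy8⟩ := hF y hyF
        have hip1 := hip x hxC y hyC hne
        rw [inner_split] at hip1
        nlinarith [mul_le_mul hx8 hy8 (by linarith) (by linarith : (0:ℝ) ≤ ε * x 8)]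
      have := nonpos_inner_aux 8 (EuclideanSpace ℝ (Fin 8)) finrank_euclideanSpace_fin t h0t hpt
      omega
  -- the caps are finite with at most 16 points each
  have capSet : ∀ ε : ℝ, ε = 1 ∨ ε = -1 →
      ({x | x ∈ C ∧ 1 ≤ ε * x 8}).Finite ∧ ({x | x ∈ C ∧ 1 ≤ ε * x 8}).ncard ≤ 16 := by
    intro ε hε
    set s := {x : EuclideanSpace ℝ (Fin 9) | x ∈ C ∧ 1 ≤ ε * x 8} with hs
    have hfin : s.Finite := by
      by_contra hinf
      obtain ⟨u, husub, hufin, hucard⟩ := Set.Infinite.exists_subset_ncard_eq hinf 17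
      have := capBound ε hε hufin.toFinset (by
        intro x hx
        have : x ∈ s := husub (hufin.mem_toFinset.mp hx)
        exact this)
      rw [Set.ncard_eq_toFinset_card _ hufin] at hucard
      omega
    refine ⟨hfin, ?_⟩
    have := capBound ε hε hfin.toFinset (fun x hx => hfin.mem_toFinset.mp hx)
    rw [Set.ncard_eq_toFinset_card _ hfin]
    omega
  obtain ⟨hfinP, hcardP⟩ := capSet 1 (Or.inl rfl)
  obtain ⟨hfinM, hcardM⟩ := capSet (-1) (Or.inr rfl)
  -- cover
  have cover : C ⊆ (C ∩ E8EmbeddedIn9) ∪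
      ({x | x ∈ C ∧ 1 ≤ (1:ℝ) * x 8} ∪ {x | x ∈ C ∧ 1 ≤ (-1:ℝ) * x 8}) := by
    intro x hxC
    by_cases hxE : x ∈ E8EmbeddedIn9
    · exact Or.inl ⟨hxC, hxE⟩
    · have h1 := key x hxC hxE
      rcases le_or_gt 0 (x 8) with h | h
      · exact Or.inr (Or.inl ⟨hxC, by nlinarith⟩)
      · exact Or.inr (Or.inr ⟨hxC, by nlinarith⟩)
  have hfin0 : (C ∩ E8EmbeddedIn9).Finite := hEmbFin.subset Set.inter_subset_right
  have hCfin : C.Finite := ((hfin0.union (hfinP.union hfinM)).subset cover)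
  refine ⟨hCfin, ?_⟩
  calc C.ncard ≤ ((C ∩ E8EmbeddedIn9) ∪
        ({x | x ∈ C ∧ 1 ≤ (1:ℝ) * x 8} ∪ {x | x ∈ C ∧ 1 ≤ (-1:ℝ) * x 8})).ncard :=
        Set.ncard_le_ncard cover (hfin0.union (hfinP.union hfinM))
    _ ≤ (C ∩ E8EmbeddedIn9).ncard +
        ({x | x ∈ C ∧ 1 ≤ (1:ℝ) * x 8} ∪ {x | x ∈ C ∧ 1 ≤ (-1:ℝ) * x 8}).ncard :=
        Set.ncard_union_le _ _
    _ ≤ (C ∩ E8EmbeddedIn9).ncard +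
        (({x | x ∈ C ∧ 1 ≤ (1:ℝ) * x 8}).ncard + ({x | x ∈ C ∧ 1 ≤ (-1:ℝ) * x 8}).ncard) := by
        exact Nat.add_le_add_left (Set.ncard_union_le _ _) _
    _ ≤ 240 + (16 + 16) := by
        have h0 : (C ∩ E8EmbeddedIn9).ncard ≤ 240 :=
          le_trans (Set.ncard_le_ncard Set.inter_subset_right hEmbFin) hEmbCard
        exact Nat.add_le_add h0 (Nat.add_le_add hcardP hcardM)
    _ = 272 := by norm_num
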